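/- Let κ be a regular uncountable cardinal, let λ ≥ κ be a cardinal, and let U be a κ-complete normal fine ultrafilter on P_κ(λ). Then the set {P ∈ P_κ(λ) : κ_P is an inaccessible cardinal} belongs to U. -/

import Mathlib

open Set Cardinal

/-- The order type of a set of ordinals. -/
noncomputable def otp (S : Set Ordinal.{0}) : Ordinal.{0} :=
  sInf {α : Ordinal.{0} | Nonempty (↥S ≃o ↥(Iio α))}

/-- `P_κ(λ)`: sets `P ⊆ λ` of order type `< κ` with `P ∩ κ` an ordinal `< κ`. -/
def PklSet (κ lam : Cardinal.{0}) : Set (Set Ordinal.{0}) :=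
  {P | P ⊆ Iio lam.ord ∧ otp P < κ.ord ∧ ∃ α < κ.ord, P ∩ Iio κ.ord = Iio α}

/-- `λ_P`, the order type of `P`. -/
noncomputable def lpt (P : Set Ordinal.{0}) : Ordinal.{0} := otp P

/-- `κ_P = P ∩ κ` (as an ordinal, i.e. the order type of `P ∩ κ`). -/
noncomputable def kpt (κ : Cardinal.{0}) (P : Set Ordinal.{0}) : Ordinal.{0} :=
  otp (P ∩ Iio κ.ord)

/-- `P ≺ Q` iff `P ⊆ Q` and `λ_P < κ_Q`. -/
def Prec (κ : Cardinal.{0}) (P Q : Set Ordinal.{0}) : Prop := P ⊆ Q ∧ lpt P < kpt κ Q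

/-- `U` is `κ`-complete: closed under intersections of families of fewer than `κ` members. -/
def PklComplete (κ : Cardinal.{0}) {X : Type*} (U : Ultrafilter X) : Prop :=
  ∀ γ : Ordinal.{0}, γ.card < κ → ∀ f : ↥(Iio γ) → Set X, (∀ i, f i ∈ U) → (⋂ i, f i) ∈ U

/-- `U` is fine: for every `α < λ`, the set of `P` with `α ∈ P` is in `U`. -/
def PklFine (κ lam : Cardinal.{0}) (U : Ultrafilter ↥(PklSet κ lam)) : Prop :=
  ∀ α < lam.ord, {P : ↥(PklSet κ lam) | α ∈ P.1} ∈ U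

/-- `U` is normal: every choice function on a set in `U` is constant on a set in `U`. -/
def PklNormal (κ lam : Cardinal.{0}) (U : Ultrafilter ↥(PklSet κ lam)) : Prop :=
  ∀ A : Set ↥(PklSet κ lam), A ∈ U → ∀ f : ↥(PklSet κ lam) → Ordinal.{0},
    (∀ P ∈ A, f P ∈ P.1) → ∃ α : Ordinal.{0}, {P | P ∈ A ∧ f P = α} ∈ U

/-- An ordinal is an inaccessible cardinal. -/
def IsInaccOrd (o : Ordinal.{0}) : Prop := o.card.ord = o ∧ o.card.IsInaccessible

/-- `o` is the least inaccessible (as an ordinal) above `a`. -/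
def IsLeastInaccOrdAbove (a o : Ordinal.{0}) : Prop :=
  a < o ∧ IsInaccOrd o ∧ ∀ o', a < o' → IsInaccOrd o' → o ≤ o'

/-- `lam` is the least inaccessible cardinal above `κ`. -/
def IsLeastInaccAbove (κ lam : Cardinal.{0}) : Prop :=
  κ < lam ∧ lam.IsInaccessible ∧ ∀ μ, κ < μ → μ.IsInaccessible → lam ≤ μ

/-- A condition of the Levy collapse `Col(ν, <ρ)`, coded by its graph: a partial function
on `ν × ρ` of size `< ν` with `p(α, β) ∈ β`. -/
def IsLevyCond (ν ρ : Cardinal.{0}) (s : Set ((Ordinal.{0} × Ordinal.{0}) × Ordinal.{0})) :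
    Prop :=
  (∀ x ∈ s, x.1.1 < ν.ord ∧ x.1.2 < ρ.ord ∧ x.2 < x.1.2) ∧
  (∀ x ∈ s, ∀ y ∈ s, x.1 = y.1 → x.2 = y.2) ∧
  Cardinal.mk ↥(Prod.fst '' s) < Cardinal.lift.{1} ν

lemma iso_Iio_inj {a b : Ordinal.{0}} (e : ↥(Iio a) ≃o ↥(Iio b)) : a = b := by
  haveI wa : IsWellOrder a.ToType (· < ·) := isWellOrder_lt
  haveI wb : IsWellOrder b.ToType (· < ·) := isWellOrder_lt
  have e2 : a.ToType ≃o b.ToType :=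
    ((Ordinal.ToType.mk (o := a)).symm.trans e).trans (Ordinal.ToType.mk (o := b))
  have h : Ordinal.type ((· < ·) : a.ToType → a.ToType → Prop)
      = Ordinal.type ((· < ·) : b.ToType → b.ToType → Prop) :=
    (Ordinal.type_eq (r := ((· < ·) : a.ToType → a.ToType → Prop))
      (s := ((· < ·) : b.ToType → b.ToType → Prop))).2 ⟨e2.toRelIsoLT⟩
  rwa [Ordinal.type_toType, Ordinal.type_toType] at h

lemma otp_Iio (a : Ordinal.{0}) : otp (Iio a) = a := by
  have hset : {α : Ordinal.{0} | Nonempty (↥(Iio a) ≃o ↥(Iio α))} = {a} := by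
    ext b
    constructor
    · rintro ⟨e⟩
      exact (iso_Iio_inj e).symm
    · rintro rfl
      exact ⟨OrderIso.refl _⟩
  rw [otp, hset, csInf_singleton]

lemma kpt_spec {κ lam : Cardinal.{0}} (P : ↥(PklSet κ lam)) :
    kpt κ P.1 < κ.ord ∧ P.1 ∩ Iio κ.ord = Iio (kpt κ P.1) := by
  obtain ⟨-, -, α, hα, hand⟩ := P.2
  have hk : kpt κ P.1 = α := by
    unfold kpt
    rw [hand, otp_Iio]
  rw [hk]
  exact ⟨hα, hand⟩

/-- If `κ` is regular uncountable, `λ ≥ κ`, and `U` a `κ`-complete normal fine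
ultrafilter on `P_κ(λ)`, then `{P : κ_P is inaccessible}` belongs to `U`. -/
theorem kappaP_inaccessible_set_mem
    (κ lam : Cardinal.{0}) (hreg : κ.IsRegular) (huncount : ℵ₀ < κ)
    (hkl : κ ≤ lam)
    (U : Ultrafilter ↥(PklSet κ lam))
    (hcomp : PklComplete κ U) (hnorm : PklNormal κ lam U) (hfine : PklFine κ lam U) :
    {P : ↥(PklSet κ lam) | IsInaccOrd (kpt κ P.1)} ∈ U := by
  classical
  -- basic: sets with large κ_P are in U
  have gt_mem : ∀ α, α < κ.ord → {P : ↥(PklSet κ lam) | α < kpt κ P.1} ∈ U := by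
    intro α hα
    have h1 := hfine α (hα.trans_le (Cardinal.ord_le_ord.2 hkl))
    refine Filter.mem_of_superset h1 ?_
    intro P hP
    have hmem : α ∈ P.1 ∩ Iio κ.ord := ⟨hP, hα⟩
    rw [(kpt_spec P).2] at hmem
    exact hmem
  -- κ_P is not constant on any set in U
  have not_const : ∀ B : Set ↥(PklSet κ lam), B ∈ U → ∀ c₀, (∀ P ∈ B, kpt κ P.1 = c₀) → False := by
    intro B hB c₀ hconst
    obtain ⟨P0, hP0⟩ := Ultrafilter.nonempty_of_mem hB
    have hc₀ : c₀ < κ.ord := hconst P0 hP0 ▸ (kpt_spec P0).1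
    have hD := gt_mem c₀ hc₀
    obtain ⟨P1, hP1B, hP1D⟩ := Ultrafilter.nonempty_of_mem (Filter.inter_mem hB hD)
    exact absurd (hconst P1 hP1B) (ne_of_gt hP1D)
  -- normality for functions pressing down below κ_P
  have normW : ∀ A : Set ↥(PklSet κ lam), A ∈ U → ∀ f : ↥(PklSet κ lam) → Ordinal.{0}, (∀ P ∈ A, f P < kpt κ P.1) →
      ∃ α, {P | P ∈ A ∧ f P = α} ∈ U := by
    intro A hA f hf
    refine hnorm A hA f fun P hP => ?_
    have h1 : f P ∈ Iio (kpt κ P.1) := hf P hP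
    rw [← (kpt_spec P).2] at h1
    exact h1.1
  -- completeness, reindexed by `toType`
  have interW : ∀ γ : Ordinal.{0}, γ.card < κ → ∀ g : γ.ToType → Set ↥(PklSet κ lam),
      (∀ i, g i ∈ U) → {P : ↥(PklSet κ lam) | ∀ i, P ∈ g i} ∈ U := by
    intro γ hγ g hg
    have h1 := hcomp γ hγ (fun x => g (Ordinal.ToType.mk (o := γ) x))
      (fun x => hg _)
    refine Filter.mem_of_superset h1 ?_
    intro P hP i
    have h2 := Set.mem_iInter.1 hP ((Ordinal.ToType.mk (o := γ)).symm i)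
    simpa using h2
  -- any `< κ`-indexed Prop-valued function is constant on a set in U
  have inj_const : ∀ γ : Ordinal.{0}, γ.card < κ → ∀ φ : ↥(PklSet κ lam) → (γ.ToType → Prop),
      ∃ B ∈ U, ∃ T, ∀ P ∈ B, φ P = T := by
    intro γ hγ φ
    have hgU : ∀ i : γ.ToType,
        (if {P : ↥(PklSet κ lam) | φ P i} ∈ U then {P : ↥(PklSet κ lam) | φ P i} else {P : ↥(PklSet κ lam) | φ P i}ᶜ) ∈ U := by
      intro i
      split
      · assumption
      · exact (Ultrafilter.compl_mem_iff_notMem).2 (by assumption)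
    have hB := interW γ hγ _ hgU
    refine ⟨_, hB, fun i => {P : ↥(PklSet κ lam) | φ P i} ∈ U, ?_⟩
    intro P hP
    funext i
    have h1 := hP i
    by_cases hi : {P : ↥(PklSet κ lam) | φ P i} ∈ U
    · rw [if_pos hi] at h1
      exact propext ⟨fun _ => hi, fun _ => h1⟩
    · rw [if_neg hi] at h1
      exact propext ⟨fun h => absurd h h1, fun h => absurd h hi⟩
  -- κ ≤ 2 ^ c is impossible for c < κ
  have no_power : ∀ c : Cardinal.{0}, c < κ → ¬ κ ≤ 2 ^ c := by
    intro c hc hle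
    have hmk : #(c.ord.ToType → Prop) = 2 ^ c := by
      rw [← Cardinal.power_def, Cardinal.mk_Prop, Cardinal.mk_toType, Cardinal.card_ord]
    have hκmk : #(κ.ord.ToType) = κ := by rw [Cardinal.mk_toType, Cardinal.card_ord]
    obtain ⟨h⟩ : Nonempty (κ.ord.ToType ↪ (c.ord.ToType → Prop)) := by
      rw [← Cardinal.le_def, hmk, hκmk]
      exact hle
    have hcard : c.ord.card < κ := by rw [Cardinal.card_ord]; exact hc
    obtain ⟨B, hB, T, hT⟩ := inj_const c.ord hcard
      (fun P => h ((Ordinal.ToType.mk (o := κ.ord)) ⟨kpt κ P.1, (kpt_spec P).1⟩))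
    obtain ⟨P0, hP0⟩ := Ultrafilter.nonempty_of_mem hB
    refine not_const B hB (kpt κ P0.1) fun P hP => ?_
    have h1 : h ((Ordinal.ToType.mk (o := κ.ord)) ⟨kpt κ P.1, (kpt_spec P).1⟩)
        = h ((Ordinal.ToType.mk (o := κ.ord)) ⟨kpt κ P0.1, (kpt_spec P0).1⟩) := by
      rw [hT P hP, hT P0 hP0]
    have h2 := (Ordinal.ToType.mk (o := κ.ord)).injective (h.injective h1)
    exact congrArg Subtype.val h2
  -- κ_P is regular (an initial ordinal equal to the ord of its cofinality) on a U-set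
  have S2 : {P : ↥(PklSet κ lam) | ((kpt κ P.1).cof).ord = kpt κ P.1} ∈ U := by
    by_contra hS2
    have hC : {P : ↥(PklSet κ lam) | ¬ ((kpt κ P.1).cof).ord = kpt κ P.1} ∈ U := by
      have h1 := (Ultrafilter.compl_mem_iff_notMem).2 hS2
      rwa [Set.compl_setOf] at h1
    have hflt : ∀ P : ↥(PklSet κ lam), P ∈ {P : ↥(PklSet κ lam) | ¬ ((kpt κ P.1).cof).ord = kpt κ P.1} →
        ((kpt κ P.1).cof).ord < kpt κ P.1 :=
      fun P hP => lt_of_le_of_ne (Ordinal.ord_cof_le _) hP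
    obtain ⟨ρ, hA⟩ := normW _ hC _ hflt
    set A := {P : ↥(PklSet κ lam) | P ∈ {P : ↥(PklSet κ lam) | ¬ ((kpt κ P.1).cof).ord = kpt κ P.1} ∧
      ((kpt κ P.1).cof).ord = ρ} with hAdef
    have hρlt : ∀ P ∈ A, ρ < kpt κ P.1 := by
      intro P hP
      have := hflt P hP.1
      rwa [hP.2] at this
    obtain ⟨P0, hP0⟩ := Ultrafilter.nonempty_of_mem hA
    have hρκ : ρ.card < κ :=
      Cardinal.lt_ord.1 ((hρlt P0 hP0).trans (kpt_spec P0).1)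
    -- choose fundamental sequences
    have hg : ∀ P : ↥(PklSet κ lam), ∃ g : ρ.ToType → Ordinal.{0},
        P ∈ A → Ordinal.lsub g = kpt κ P.1 := by
      intro P
      by_cases hP : P ∈ A
      · obtain ⟨ι, f, hlsub, hι⟩ := Ordinal.exists_lsub_cof (kpt κ P.1)
        have hcof : (kpt κ P.1).cof = ρ.card := by
          have := hP.2
          rw [← this, Cardinal.card_ord]
        have hmk : #ρ.ToType = #ι := by
          rw [Cardinal.mk_toType, hι, hcof]
        obtain ⟨e⟩ := Cardinal.eq.1 hmk
        refine ⟨f ∘ e, fun _ => ?_⟩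
        rw [← hlsub]
        exact Ordinal.lsub_eq_of_range_eq (by
          rw [Set.range_comp]
          rw [e.range_eq_univ, Set.image_univ])
      · exact ⟨fun _ => 0, fun h => absurd h hP⟩
    choose g hgspec using hg
    have hαi : ∀ i : ρ.ToType, ∃ α, {P | P ∈ A ∧ g P i = α} ∈ U := by
      intro i
      refine normW A hA (fun P => g P i) fun P hP => ?_
      rw [← hgspec P hP]
      exact Ordinal.lt_lsub _ i
    choose α hα using hαi
    have hρc : ρ.card < κ := hρκ
    have hB := interW ρ hρc (fun i => {P | P ∈ A ∧ g P i = α i}) hα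
    have hBA := Filter.inter_mem hB hA
    refine not_const _ hBA (Ordinal.lsub α) fun P hP => ?_
    have h1 : g P = α := funext fun i => (hP.1 i).2
    rw [← hgspec P hP.2, h1]
  -- κ_P.card is a strong limit on a U-set
  have S3 : {P : ↥(PklSet κ lam) | ∀ β < kpt κ P.1, ¬ ((kpt κ P.1).card ≤ 2 ^ β.card)} ∈ U := by
    by_contra hS3
    have hC : {P : ↥(PklSet κ lam) | ∃ β, β < kpt κ P.1 ∧ (kpt κ P.1).card ≤ 2 ^ β.card} ∈ U := by
      have h1 := (Ultrafilter.compl_mem_iff_notMem).2 hS3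
      rw [Set.compl_setOf] at h1
      refine Filter.mem_of_superset h1 ?_
      intro P hP
      push_neg at hP
      exact hP
    set C := {P : ↥(PklSet κ lam) | ∃ β, β < kpt κ P.1 ∧ (kpt κ P.1).card ≤ 2 ^ β.card} with hCdef
    have hfch : ∀ P : ↥(PklSet κ lam), ∃ β : Ordinal.{0},
        P ∈ C → β < kpt κ P.1 ∧ (kpt κ P.1).card ≤ 2 ^ β.card := by
      intro P
      by_cases hP : P ∈ C
      · obtain ⟨β, hβ⟩ := hP
        exact ⟨β, fun _ => hβ⟩
      · exact ⟨0, fun h => absurd h hP⟩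
    choose f hf using hfch
    obtain ⟨β₀, hA⟩ := normW C hC f fun P hP => (hf P hP).1
    set A := {P : ↥(PklSet κ lam) | P ∈ C ∧ f P = β₀} with hAdef
    obtain ⟨P0, hP0⟩ := Ultrafilter.nonempty_of_mem hA
    have hβ₀lt : β₀ < kpt κ P0.1 := hP0.2 ▸ (hf P0 hP0.1).1
    have hbκ : β₀.card < κ := Cardinal.lt_ord.1 (hβ₀lt.trans (kpt_spec P0).1)
    set b : Cardinal.{0} := β₀.card with hb
    set s2b : Cardinal.{0} := Order.succ (2 ^ b) with hs2b
    have hup : ∀ P ∈ A, kpt κ P.1 < s2b.ord := by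
      intro P hP
      rw [Cardinal.lt_ord]
      have h1 := (hf P hP.1).2
      rw [hP.2] at h1
      exact h1.trans_lt (Order.lt_succ _)
    by_cases hcase : s2b < κ
    · have hD := gt_mem (s2b.ord) (Cardinal.ord_lt_ord.2 hcase)
      obtain ⟨P1, hP1A, hP1D⟩ :=
        Ultrafilter.nonempty_of_mem (Filter.inter_mem hA hD)
      exact absurd (hup P1 hP1A) (not_lt.2 (le_of_lt hP1D))
    · have hκle : κ ≤ s2b := not_lt.1 hcase
      by_cases h2 : κ ≤ (2 : Cardinal.{0}) ^ b
      · exact no_power b hbκ h2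
      · have h2b : (2 : Cardinal.{0}) ^ b < κ := not_le.1 h2
        have h3 : κ ≤ (2 : Cardinal.{0}) ^ ((2 : Cardinal.{0}) ^ b) := by
          refine hκle.trans ?_
          rw [hs2b]
          exact Order.succ_le_of_lt (Cardinal.cantor _)
        exact no_power ((2 : Cardinal.{0}) ^ b) h2b h3
  -- κ_P > ω on a U-set
  have S1 : {P : ↥(PklSet κ lam) | Cardinal.ord ℵ₀ < kpt κ P.1} ∈ U :=
    gt_mem (Cardinal.ord ℵ₀) (Cardinal.ord_lt_ord.2 huncount)
  -- assemble
  refine Filter.mem_of_superset (Filter.inter_mem S1 (Filter.inter_mem S2 S3)) ?_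
  rintro P ⟨h1, h2, h3⟩
  simp only [Set.mem_setOf_eq] at h1 h2 h3 ⊢
  generalize kpt κ P.1 = o at h1 h2 h3 ⊢
  have hcard : o.card.ord = o := by
    refine le_antisymm (Cardinal.ord_card_le o) ?_
    calc o = o.cof.ord := h2.symm
      _ ≤ o.card.ord := Cardinal.ord_le_ord.2 (Ordinal.cof_le_card o)
  have hcof : o.cof = o.card := Cardinal.ord_injective (h2.trans hcard.symm)
  have haleph : ℵ₀ < o.card := by
    rw [← Cardinal.ord_lt_ord, hcard]
    exact h1
  refine ⟨hcard, haleph, ?_, ?_⟩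
  · rw [hcard, hcof]
  · intro x hx
    have hβ : x.ord < o := by
      rw [← hcard]
      exact Cardinal.ord_lt_ord.2 hx
    have h4 := h3 x.ord hβ
    rw [Cardinal.card_ord] at h4
    exact not_le.1 h4
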